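/- Let W : □_2 → V(K)⁺ be an affine map of the square into a positive cone. If W is degenerate, i.e., the affine dimension of W(□_2) is at most 1, then W is entanglement breaking. -/

import Mathlib

def Square : Set ((Fin 2 → ℝ) × (Fin 2 → ℝ)) :=
  (stdSimplex ℝ (Fin 2)) ×ˢ (stdSimplex ℝ (Fin 2))

def sqVert (i j : Fin 2) : (Fin 2 → ℝ) × (Fin 2 → ℝ) := (Pi.single i 1, Pi.single j 1)

def coneOf {E : Type*} [AddCommGroup E] [Module ℝ E] (K : Set E) : Set E :=
  {v | ∃ c : ℝ, 0 ≤ c ∧ ∃ x ∈ K, v = c • x}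

def IsAffineOn {E V : Type*} [AddCommGroup E] [Module ℝ E] [AddCommGroup V] [Module ℝ V]
    (C : Set E) (f : E → V) : Prop :=
  ∀ x ∈ C, ∀ y ∈ C, ∀ a b : ℝ, 0 ≤ a → 0 ≤ b → a + b = 1 →
    f (a • x + b • y) = a • f x + b • f y

lemma coneOf_smul {E : Type*} [AddCommGroup E] [Module ℝ E] {K : Set E} {c : ℝ}
    (hc : 0 ≤ c) {v : E} (hv : v ∈ coneOf K) : c • v ∈ coneOf K := by
  obtain ⟨c', hc', x, hx, rfl⟩ := hv
  exact ⟨c * c', mul_nonneg hc hc', x, hx, smul_smul c c' x⟩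

lemma cone_decomp {E : Type*} [AddCommGroup E] [Module ℝ E] {K : Set E}
    {x y : E} (hx : x ∈ coneOf K) (hy : y ∈ coneOf K) {A B : ℝ}
    (hA : 0 ≤ A) (hB : 0 ≤ B) (hS : 0 < A + B) :
    ∃ ψa ψb : Fin 2 → E, (∀ i, ψa i ∈ coneOf K) ∧ (∀ j, ψb j ∈ coneOf K) ∧
      ψa 0 + ψb 0 = x ∧ ψa 1 + ψb 1 = y ∧
      ψa 1 + ψb 0 = (B / (A + B)) • x + (A / (A + B)) • y ∧
      ψa 0 + ψb 1 = (A / (A + B)) • x + (B / (A + B)) • y := by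
  have hS' : A + B ≠ 0 := hS.ne'
  refine ⟨![(A / (A + B)) • x, (A / (A + B)) • y],
          ![(B / (A + B)) • x, (B / (A + B)) • y], ?_, ?_, ?_, ?_, ?_, ?_⟩
  · intro i; fin_cases i <;>
      exact coneOf_smul (div_nonneg (by assumption) hS.le) (by assumption)
  · intro j; fin_cases j <;>
      exact coneOf_smul (div_nonneg (by assumption) hS.le) (by assumption)
  · show (A / (A + B)) • x + (B / (A + B)) • x = x
    rw [← add_smul, ← add_div, div_self hS', one_smul]
  · show (A / (A + B)) • y + (B / (A + B)) • y = y
    rw [← add_smul, ← add_div, div_self hS', one_smul]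
  · show (A / (A + B)) • y + (B / (A + B)) • x = _
    abel
  · rfl


lemma sqVert_mem_Square (i j : Fin 2) : sqVert i j ∈ Square :=
  ⟨single_mem_stdSimplex ℝ i, single_mem_stdSimplex ℝ j⟩

lemma sq_key : (1/2 : ℝ) • sqVert 0 0 + (1/2 : ℝ) • sqVert 1 1
    = (1/2 : ℝ) • sqVert 0 1 + (1/2 : ℝ) • sqVert 1 0 := by
  refine Prod.ext ?_ ?_ <;> funext k <;> fin_cases k <;>
    simp [sqVert, Pi.single_apply] <;> norm_num

/-- if an affine map `W : □_2 → V(K)⁺` is degenerate (its image has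
affine dimension at most 1, i.e. lies on a line), then `W` is entanglement
breaking, i.e. its vertex images decompose as `w_{i,j} = ψ^0_i + ψ^1_j` with
`ψ^0_i, ψ^1_j ∈ V(K)⁺`. -/
theorem stmt_17 {E : Type*} [NormedAddCommGroup E] [NormedSpace ℝ E] [FiniteDimensional ℝ E]
    (K : Set E) (hK : Convex ℝ K) (hKc : IsCompact K) (h0 : (0 : E) ∉ K)
    (W : ((Fin 2 → ℝ) × (Fin 2 → ℝ)) → E)
    (hW : IsAffineOn Square W) (hWpos : ∀ s ∈ Square, W s ∈ coneOf K)
    (hdeg : ∃ p q : E, ∀ s ∈ Square, ∃ t : ℝ, W s = p + t • (q - p)) :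
    ∃ ψ0 ψ1 : Fin 2 → E,
      (∀ i, ψ0 i ∈ coneOf K) ∧ (∀ j, ψ1 j ∈ coneOf K) ∧
      ∀ i j : Fin 2, W (sqVert i j) = ψ0 i + ψ1 j := by
  obtain ⟨p, q, hpq⟩ := hdeg
  have hv := sqVert_mem_Square
  have hw : ∀ i j, W (sqVert i j) ∈ coneOf K := fun i j => hWpos _ (hv i j)
  obtain ⟨t00, h00⟩ := hpq _ (hv 0 0)
  obtain ⟨t01, h01⟩ := hpq _ (hv 0 1)
  obtain ⟨t10, h10⟩ := hpq _ (hv 1 0)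
  obtain ⟨t11, h11⟩ := hpq _ (hv 1 1)
  -- parallelogram identity
  have h1 := hW _ (hv 0 0) _ (hv 1 1) (1/2) (1/2) (by norm_num) (by norm_num) (by norm_num)
  have h2 := hW _ (hv 0 1) _ (hv 1 0) (1/2) (1/2) (by norm_num) (by norm_num) (by norm_num)
  rw [sq_key, h2] at h1
  have hpar : W (sqVert 0 1) + W (sqVert 1 0) = W (sqVert 0 0) + W (sqVert 1 1) := by
    have h3 := congrArg (fun z : E => (2:ℝ) • z) h1
    simp only [smul_add, smul_smul] at h3
    norm_num at h3
    exact h3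
  by_cases hc : ∀ i j : Fin 2, W (sqVert i j) = W (sqVert 0 0)
  · refine ⟨fun _ => (1/2 : ℝ) • W (sqVert 0 0), fun _ => (1/2 : ℝ) • W (sqVert 0 0),
      fun _ => coneOf_smul (by norm_num) (hw 0 0), fun _ => coneOf_smul (by norm_num) (hw 0 0),
      fun i j => ?_⟩
    rw [hc i j]; module
  · have hdne : q - p ≠ 0 := by
      intro h
      exact hc fun i j => by
        obtain ⟨t, ht⟩ := hpq _ (hv i j)
        rw [ht, h00, h, smul_zero, smul_zero]
    have hrel : t11 = t01 + t10 - t00 := by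
      have h4 : ((t01 + t10) - (t00 + t11)) • (q - p) =
          (W (sqVert 0 1) + W (sqVert 1 0)) - (W (sqVert 0 0) + W (sqVert 1 1)) := by
        rw [h00, h01, h10, h11]; module
      rw [hpar, sub_self] at h4
      rcases smul_eq_zero.mp h4 with h5 | h5
      · linarith
      · exact absurd h5 hdne
    have hnb : ¬(t10 = t00 ∧ t01 = t00) := by
      rintro ⟨e1, e2⟩
      refine hc fun i j => ?_
      have e3 : t11 = t00 := by rw [hrel, e1, e2]; ring
      fin_cases i <;> fin_cases j
      · rfl
      · show W (sqVert 0 1) = W (sqVert 0 0); rw [h01, h00, e2]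
      · show W (sqVert 1 0) = W (sqVert 0 0); rw [h10, h00, e1]
      · show W (sqVert 1 1) = W (sqVert 0 0); rw [h11, h00, e3]
    rw [hrel] at h11
    rcases le_or_gt t00 t10 with hA | hA <;> rcases le_or_gt t00 t01 with hB | hB
    · -- A ≥ 0, B ≥ 0
      have hA' : 0 ≤ t10 - t00 := by linarith
      have hB' : 0 ≤ t01 - t00 := by linarith
      have hS : 0 < (t10 - t00) + (t01 - t00) := by
        rcases (add_nonneg hA' hB').lt_or_eq with h | h
        · exact h
        · exact absurd ⟨by linarith, by linarith⟩ hnb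
      obtain ⟨ψa, ψb, hma, hmb, e00, e11, ecr1, ecr2⟩ :=
        cone_decomp (K := K) (hw 0 0) (hw 1 1) hA' hB' hS
      refine ⟨ψa, ψb, hma, hmb, fun i j => ?_⟩
      fin_cases i <;> fin_cases j
      · exact e00.symm
      · show W (sqVert 0 1) = ψa 0 + ψb 1
        rw [ecr2, h00, h11, h01]
        match_scalars <;> field_simp <;> ring
      · show W (sqVert 1 0) = ψa 1 + ψb 0
        rw [ecr1, h00, h11, h10]
        match_scalars <;> field_simp <;> ring
      · exact e11.symm
    · -- A ≥ 0, B < 0 : min at (0,1), max at (1,0)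
      have hA' : 0 ≤ t10 - t00 := by linarith
      have hB' : 0 ≤ t00 - t01 := by linarith
      have hS : 0 < (t10 - t00) + (t00 - t01) := by linarith
      obtain ⟨ψa, ψb, hma, hmb, e00, e11, ecr1, ecr2⟩ :=
        cone_decomp (K := K) (hw 0 1) (hw 1 0) hA' hB' hS
      have hne : t10 - t01 ≠ 0 := by
        have : t01 < t10 := by linarith
        exact sub_ne_zero.mpr this.ne'
      refine ⟨ψa, ![ψb 1, ψb 0], hma, fun j => by fin_cases j <;> apply hmb, fun i j => ?_⟩
      fin_cases i <;> fin_cases j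
      · show W (sqVert 0 0) = ψa 0 + ψb 1
        rw [ecr2, h01, h10, h00]
        match_scalars <;> field_simp [hne] <;> ring
      · exact e00.symm
      · exact e11.symm
      · show W (sqVert 1 1) = ψa 1 + ψb 0
        rw [ecr1, h01, h10, h11]
        match_scalars <;> field_simp [hne] <;> ring
    · -- A < 0, B ≥ 0 : min at (1,0), max at (0,1)
      have hA' : 0 ≤ t00 - t10 := by linarith
      have hB' : 0 ≤ t01 - t00 := by linarith
      have hS : 0 < (t00 - t10) + (t01 - t00) := by linarith
      have hne : t01 - t10 ≠ 0 := by
        have : t10 < t01 := by linarith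
        exact sub_ne_zero.mpr this.ne'
      obtain ⟨ψa, ψb, hma, hmb, e00, e11, ecr1, ecr2⟩ :=
        cone_decomp (K := K) (hw 1 0) (hw 0 1) hA' hB' hS
      refine ⟨![ψa 1, ψa 0], ψb, fun i => by fin_cases i <;> apply hma, hmb, fun i j => ?_⟩
      fin_cases i <;> fin_cases j
      · show W (sqVert 0 0) = ψa 1 + ψb 0
        rw [ecr1, h10, h01, h00]
        match_scalars <;> field_simp [hne] <;> ring
      · exact e11.symm
      · exact e00.symm
      · show W (sqVert 1 1) = ψa 0 + ψb 1
        rw [ecr2, h10, h01, h11]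
        match_scalars <;> field_simp [hne] <;> ring
    · -- A < 0, B < 0 : min at (1,1), max at (0,0)
      have hA' : 0 ≤ t00 - t10 := by linarith
      have hB' : 0 ≤ t00 - t01 := by linarith
      have hS : 0 < (t00 - t10) + (t00 - t01) := by linarith
      obtain ⟨ψa, ψb, hma, hmb, e00, e11, ecr1, ecr2⟩ :=
        cone_decomp (K := K) (hw 1 1) (hw 0 0) hA' hB' hS
      refine ⟨![ψa 1, ψa 0], ![ψb 1, ψb 0], fun i => by fin_cases i <;> apply hma,
        fun j => by fin_cases j <;> apply hmb, fun i j => ?_⟩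
      fin_cases i <;> fin_cases j
      · exact e11.symm
      · show W (sqVert 0 1) = ψa 1 + ψb 0
        rw [ecr1, h11, h00, h01]
        match_scalars <;> field_simp <;> ring
      · show W (sqVert 1 0) = ψa 0 + ψb 1
        rw [ecr2, h11, h00, h10]
        match_scalars <;> field_simp <;> ring
      · exact e00.symm
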